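/- Fix a rotation vector A⃗ ∈ ℝ_{>0}^p and masses m₁,...,m_n > 0, and let a < -1/2. Then there exists c > 0 such that for every relative equilibrium configuration Q₁,...,Q_n ∈ ℝ^k (i.e., pairwise distinct points satisfying 𝐀²Q_i = Σ_{j≠i} m_j (Q_i - Q_j)‖Q_i - Q_j‖^{2a} for all i), one has ‖Q_i - Q_j‖ > c for all i ≠ j. -/

import Mathlib

open Real Finset Matrix Filter
open RealInnerProductSpace

/-- The 2×2 rotation matrix of angle `t`. -/
noncomputable def rot (t : ℝ) : Matrix (Fin 2) (Fin 2) ℝ :=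
  !![Real.cos t, -Real.sin t; Real.sin t, Real.cos t]

/-- The k×k block-diagonal matrix with 2×2 rotation blocks `rot (θ s)`
(and a final diagonal entry 1 if `k` is odd). -/
noncomputable def Tk (k : ℕ) (θ : Fin (k / 2) → ℝ) : Matrix (Fin k) (Fin k) ℝ :=
  Matrix.of fun i j =>
    if h : (i : ℕ) / 2 = (j : ℕ) / 2 ∧ (i : ℕ) / 2 < k / 2 then
      rot (θ ⟨(i : ℕ) / 2, h.2⟩) ⟨(i : ℕ) % 2, Nat.mod_lt _ (by norm_num)⟩
        ⟨(j : ℕ) % 2, Nat.mod_lt _ (by norm_num)⟩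
    else if i = j then 1 else 0

/-- The diagonal matrix `diag (A₁, A₁, ..., A_p, A_p, [0])`. -/
noncomputable def Amat (k : ℕ) (A : Fin (k / 2) → ℝ) : Matrix (Fin k) (Fin k) ℝ :=
  Matrix.diagonal fun i => if h : (i : ℕ) / 2 < k / 2 then A ⟨(i : ℕ) / 2, h⟩ else 0

/-- Matrix action on Euclidean vectors. -/
noncomputable def mulVecE {k : ℕ} (M : Matrix (Fin k) (Fin k) ℝ)
    (x : EuclideanSpace ℝ (Fin k)) : EuclideanSpace ℝ (Fin k) :=
  WithLp.toLp 2 (M.mulVec x)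

noncomputable def alphaA {k : ℕ} (A : Fin (k/2) → ℝ) : ℝ := 1 + ∑ s, (A s)^2

lemma alphaA_pos {k : ℕ} (A : Fin (k/2) → ℝ) : 0 < alphaA A := by
  have : (0:ℝ) ≤ ∑ s, (A s)^2 := Finset.sum_nonneg fun s _ => sq_nonneg _
  unfold alphaA; linarith

lemma mulVecE_sub {k : ℕ} (M : Matrix (Fin k) (Fin k) ℝ) (x y : EuclideanSpace ℝ (Fin k)) :
    mulVecE M (x - y) = mulVecE M x - mulVecE M y := by
  unfold mulVecE
  have : ((x - y : EuclideanSpace ℝ (Fin k)) : Fin k → ℝ) = (x : Fin k → ℝ) - y := rfl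
  rw [this, Matrix.mulVec_sub]; rfl

lemma quadA {k : ℕ} (A : Fin (k/2) → ℝ) (x : EuclideanSpace ℝ (Fin k)) :
    ⟪mulVecE ((Amat k A)^2) x, x⟫ ≤ alphaA A * ‖x‖^2 := by
  have hsq : (Amat k A)^2 = Matrix.diagonal
      (fun i : Fin k => (if h : (i : ℕ) / 2 < k / 2 then A ⟨(i : ℕ) / 2, h⟩ else 0)^2) := by
    rw [show (Amat k A)^2 = Amat k A * Amat k A from pow_two _]
    rw [Amat, Matrix.diagonal_mul_diagonal]
    apply congrArg Matrix.diagonal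
    funext i
    by_cases h : (i : ℕ)/2 < k/2 <;> simp [h, pow_two]
  have hx : ⟪mulVecE ((Amat k A)^2) x, x⟫
      = ∑ i : Fin k, (if h : (i : ℕ) / 2 < k / 2 then A ⟨(i : ℕ) / 2, h⟩ else 0)^2 * x i * x i := by
    rw [hsq]
    simp [mulVecE, PiLp.inner_apply, Matrix.mulVec_diagonal]
    refine Finset.sum_congr rfl fun i _ => ?_
    split_ifs <;> ring
  rw [hx]
  have hn : ⟪x, x⟫ = ∑ i, x i * x i := by rw [PiLp.inner_apply]; simp [sq]
  rw [← real_inner_self_eq_norm_sq, hn, Finset.mul_sum]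
  apply Finset.sum_le_sum
  intro i _
  have hd : (if h : (i : ℕ) / 2 < k / 2 then A ⟨(i : ℕ) / 2, h⟩ else 0)^2 ≤ alphaA A := by
    by_cases h : (i : ℕ) / 2 < k / 2
    · simp only [dif_pos h]
      unfold alphaA
      have := Finset.single_le_sum (f := fun s => (A s)^2) (fun s _ => sq_nonneg _)
        (Finset.mem_univ (⟨(i : ℕ)/2, h⟩ : Fin (k/2)))
      linarith
    · simp only [dif_neg h]
      simpa using (alphaA_pos A).le
  have hxx : (0:ℝ) ≤ x i * x i := mul_self_nonneg _
  calc (if h : (i : ℕ) / 2 < k / 2 then A ⟨(i : ℕ) / 2, h⟩ else 0)^2 * x i * x i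
      = (if h : (i : ℕ) / 2 < k / 2 then A ⟨(i : ℕ) / 2, h⟩ else 0)^2 * (x i * x i) := by ring
    _ ≤ alphaA A * (x i * x i) := mul_le_mul_of_nonneg_right hd hxx

noncomputable def Cseq (β t : ℝ) : ℕ → ℝ
  | 0 => 1
  | s+1 => Cseq β t s + (1 + β * Cseq β t s) ^ (t⁻¹)

lemma Cseq_one_le (β t : ℝ) (hβ : 0 ≤ β) : ∀ s, 1 ≤ Cseq β t s := by
  intro s
  induction s with
  | zero => simp [Cseq]
  | succ s ih =>
    have h1 : (0:ℝ) ≤ 1 + β * Cseq β t s := by nlinarith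
    have := Real.rpow_nonneg h1 t⁻¹
    simp only [Cseq]; linarith

lemma Cseq_mono (β t : ℝ) (hβ : 0 ≤ β) : Monotone (Cseq β t) := by
  apply monotone_nat_of_le_succ
  intro s
  have h1 : (0:ℝ) ≤ 1 + β * Cseq β t s := by
    have := Cseq_one_le β t hβ s; nlinarith
  have := Real.rpow_nonneg h1 t⁻¹
  simp only [Cseq]; linarith

lemma pigeon {n : ℕ} (f : ℕ → Finset (Fin n)) (hmono : ∀ s, f s ⊆ f (s+1)) :
    ∃ s ≤ n, f s = f (s+1) := by
  by_contra h
  push_neg at h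
  have key : ∀ s, s ≤ n+1 → s ≤ (f s).card := by
    intro s hs
    induction s with
    | zero => simp
    | succ s ih =>
      have h1 : s ≤ (f s).card := ih (by omega)
      have hss : f s ⊂ f (s+1) := ssubset_of_subset_of_ne (hmono s) (h s (by omega))
      have := Finset.card_lt_card hss
      omega
  have h2 := key (n+1) le_rfl
  have h3 : (f (n+1)).card ≤ n := by
    have := Finset.card_le_univ (f (n+1))
    simpa using this
  omega

lemma cluster_ineq {k n : ℕ} (A : Fin (k/2) → ℝ) (m : Fin n → ℝ) (hm : ∀ i, 0 < m i)
    (a : ℝ) (ha : a < -1/2) (Q : Fin n → EuclideanSpace ℝ (Fin k))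
    (heq : ∀ i, mulVecE ((Amat k A) ^ 2) (Q i) =
        ∑ j ∈ Finset.univ.filter (· ≠ i), (m j * ‖Q i - Q j‖ ^ (2 * a)) • (Q i - Q j))
    (S : Finset (Fin n)) (i0 j0 : Fin n) (hi0 : i0 ∈ S) (hj0 : j0 ∈ S) (hij : i0 ≠ j0)
    (ρ g : ℝ) (hρ : 0 ≤ ρ) (hg : 0 < g)
    (hball : ∀ i ∈ S, ‖Q i - Q i0‖ ≤ ρ)
    (hsep : ∀ i ∈ S, ∀ j ∉ S, g ≤ ‖Q i - Q j‖) :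
    (∑ i ∈ S, m i) * (m i0 * m j0 * (‖Q i0 - Q j0‖ ^ (2*a) * ‖Q i0 - Q j0‖^2)) ≤
      2 * alphaA A * (∑ i, m i)^2 * ρ^2 + 2 * (∑ i, m i)^3 * (g ^ (2*a) * g) * ρ := by
  classical
  set M : ℝ := ∑ i, m i with hMdef
  set MS : ℝ := ∑ i ∈ S, m i with hMSdef
  set w : Fin n → EuclideanSpace ℝ (Fin k) := fun i => ∑ l ∈ S, m l • (Q i - Q l) with hwdef
  have hMpos : 0 < M := Finset.sum_pos (fun i _ => hm i) ⟨i0, Finset.mem_univ _⟩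
  have hMSpos : 0 < MS := Finset.sum_pos (fun i _ => hm i) ⟨i0, hi0⟩
  have hMSM : MS ≤ M :=
    Finset.sum_le_sum_of_subset_of_nonneg (Finset.subset_univ S) (fun i _ _ => (hm i).le)
  -- pairwise distances within S
  have hQS : ∀ i ∈ S, ∀ j ∈ S, ‖Q i - Q j‖ ≤ 2 * ρ := by
    intro i hi j hj
    have h1 : Q i - Q j = (Q i - Q i0) - (Q j - Q i0) := by abel
    calc ‖Q i - Q j‖ = ‖(Q i - Q i0) - (Q j - Q i0)‖ := by rw [h1]
      _ ≤ ‖Q i - Q i0‖ + ‖Q j - Q i0‖ := norm_sub_le _ _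
      _ ≤ ρ + ρ := add_le_add (hball i hi) (hball j hj)
      _ = 2 * ρ := by ring
  -- norm of w
  have hw : ∀ i ∈ S, ‖w i‖ ≤ M * (2 * ρ) := by
    intro i hi
    calc ‖w i‖ ≤ ∑ l ∈ S, ‖m l • (Q i - Q l)‖ := norm_sum_le _ _
      _ ≤ ∑ l ∈ S, m l * (2 * ρ) := by
          apply Finset.sum_le_sum
          intro l hl
          rw [norm_smul, Real.norm_eq_abs, abs_of_pos (hm l)]
          exact mul_le_mul_of_nonneg_left (hQS i hi l hl) (hm l).le
      _ = MS * (2 * ρ) := by rw [← Finset.sum_mul]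
      _ ≤ M * (2 * ρ) := by nlinarith
  -- w i - w j = MS • (Q i - Q j)
  have hwsub : ∀ i j, w i - w j = MS • (Q i - Q j) := by
    intro i j
    rw [hwdef]
    simp only
    rw [← Finset.sum_sub_distrib, hMSdef, Finset.sum_smul]
    apply Finset.sum_congr rfl
    intro l _
    rw [← smul_sub]
    congr 1
    abel
  -- double sum of masses times a constant
  have hdouble : ∀ C : ℝ, ∑ i ∈ S, ∑ l ∈ S, m i * m l * C = MS * MS * C := by
    intro C
    have e1 : ∀ i : Fin n, ∑ l ∈ S, m i * m l * C = (m i * C) * MS := by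
      intro i
      rw [hMSdef, Finset.mul_sum]
      apply Finset.sum_congr rfl
      intro l _
      ring
    rw [Finset.sum_congr rfl fun i _ => e1 i, ← Finset.sum_mul, ← Finset.sum_mul]
    rw [← hMSdef]
    ring
  -- Step 1 : the quadratic-form bound
  have step1 : ∑ i ∈ S, m i * ⟪(mulVecE ((Amat k A) ^ 2) (Q i) : EuclideanSpace ℝ (Fin k)), w i⟫ ≤
      2 * alphaA A * M^2 * ρ^2 := by
    set F : Fin n → Fin n → ℝ :=
      fun i l => m i * m l * ⟪(mulVecE ((Amat k A) ^ 2) (Q i) : EuclideanSpace ℝ (Fin k)), Q i - Q l⟫ with hFdef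
    have hexp : ∑ i ∈ S, m i * ⟪(mulVecE ((Amat k A) ^ 2) (Q i) : EuclideanSpace ℝ (Fin k)), w i⟫
        = ∑ i ∈ S, ∑ l ∈ S, F i l := by
      apply Finset.sum_congr rfl
      intro i _
      rw [hwdef]
      simp only
      rw [inner_sum, Finset.mul_sum]
      apply Finset.sum_congr rfl
      intro l _
      rw [real_inner_smul_right, hFdef]
      ring
    have hsym : (∑ i ∈ S, ∑ l ∈ S, F i l) * 2
        = ∑ i ∈ S, ∑ l ∈ S, m i * m l *
            ⟪(mulVecE ((Amat k A) ^ 2) (Q i - Q l) : EuclideanSpace ℝ (Fin k)), Q i - Q l⟫ := by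
      have h1 : ∑ i ∈ S, ∑ l ∈ S, F i l = ∑ i ∈ S, ∑ l ∈ S, F l i := by
        rw [Finset.sum_comm]
      calc (∑ i ∈ S, ∑ l ∈ S, F i l) * 2
          = (∑ i ∈ S, ∑ l ∈ S, F i l) + (∑ i ∈ S, ∑ l ∈ S, F l i) := by rw [← h1]; ring
        _ = ∑ i ∈ S, ∑ l ∈ S, (F i l + F l i) := by
            rw [← Finset.sum_add_distrib]
            apply Finset.sum_congr rfl
            intro i _
            rw [← Finset.sum_add_distrib]
        _ = _ := by
            apply Finset.sum_congr rfl
            intro i _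
            apply Finset.sum_congr rfl
            intro l _
            rw [hFdef]
            simp only
            rw [mulVecE_sub, inner_sub_left]
            have h2 : (Q l - Q i : EuclideanSpace ℝ (Fin k)) = -(Q i - Q l) := by abel
            rw [h2, inner_neg_right]
            ring
    have hGbound : ∑ i ∈ S, ∑ l ∈ S, m i * m l *
        ⟪(mulVecE ((Amat k A) ^ 2) (Q i - Q l) : EuclideanSpace ℝ (Fin k)), Q i - Q l⟫
        ≤ MS * MS * (alphaA A * (2*ρ)^2) := by
      rw [← hdouble (alphaA A * (2*ρ)^2)]
      apply Finset.sum_le_sum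
      intro i hi
      apply Finset.sum_le_sum
      intro l hl
      have h1 : ⟪(mulVecE ((Amat k A) ^ 2) (Q i - Q l) : EuclideanSpace ℝ (Fin k)), Q i - Q l⟫
          ≤ alphaA A * (2*ρ)^2 := by
        calc ⟪(mulVecE ((Amat k A) ^ 2) (Q i - Q l) : EuclideanSpace ℝ (Fin k)), Q i - Q l⟫
            ≤ alphaA A * ‖Q i - Q l‖^2 := quadA A _
          _ ≤ alphaA A * (2*ρ)^2 := by
              apply mul_le_mul_of_nonneg_left _ (alphaA_pos A).le
              exact pow_le_pow_left₀ (norm_nonneg _) (hQS i hi l hl) 2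
      exact mul_le_mul_of_nonneg_left h1 (mul_nonneg (hm i).le (hm l).le)
    have hfin : (∑ i ∈ S, ∑ l ∈ S, F i l) * 2 ≤ MS * MS * (alphaA A * (2*ρ)^2) := by
      rw [hsym]; exact hGbound
    rw [hexp]
    have h5 : MS * MS ≤ M * M := by nlinarith
    have h6 : (0:ℝ) ≤ alphaA A * (2*ρ)^2 := mul_nonneg (alphaA_pos A).le (sq_nonneg _)
    have h7 : MS * MS * (alphaA A * (2*ρ)^2) ≤ M * M * (alphaA A * (2*ρ)^2) :=
      mul_le_mul_of_nonneg_right h5 h6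
    nlinarith [hfin, h7]
  -- Step 2 : split the equation sum into within-cluster and cross parts
  set T : Fin n → Fin n → ℝ := fun i j =>
      m i * (m j * ‖Q i - Q j‖ ^ (2*a) * ⟪(Q i - Q j : EuclideanSpace ℝ (Fin k)), w i⟫) with hTdef
  have hsplit : ∑ i ∈ S, m i * ⟪(mulVecE ((Amat k A) ^ 2) (Q i) : EuclideanSpace ℝ (Fin k)), w i⟫
      = (∑ i ∈ S, ∑ j ∈ S.erase i, T i j) + (∑ i ∈ S, ∑ j ∈ Finset.univ \ S, T i j) := by
    rw [← Finset.sum_add_distrib]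
    apply Finset.sum_congr rfl
    intro i hi
    rw [heq i]
    have hset : Finset.univ.filter (· ≠ i) = (S.erase i) ∪ (Finset.univ \ S) := by
      ext j
      constructor
      · intro hj
        have hji : j ≠ i := (Finset.mem_filter.mp hj).2
        by_cases hjS : j ∈ S
        · exact Finset.mem_union_left _ (Finset.mem_erase.mpr ⟨hji, hjS⟩)
        · exact Finset.mem_union_right _ (Finset.mem_sdiff.mpr ⟨Finset.mem_univ _, hjS⟩)
      · intro hj
        rcases Finset.mem_union.mp hj with h | h
        · exact Finset.mem_filter.mpr ⟨Finset.mem_univ _, (Finset.mem_erase.mp h).1⟩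
        · refine Finset.mem_filter.mpr ⟨Finset.mem_univ _, ?_⟩
          intro hji
          exact (Finset.mem_sdiff.mp h).2 (hji ▸ hi)
    have hdisj : Disjoint (S.erase i) (Finset.univ \ S) := by
      rw [Finset.disjoint_left]
      intro j hj1 hj2
      exact (Finset.mem_sdiff.mp hj2).2 (Finset.mem_of_mem_erase hj1)
    rw [hset, Finset.sum_union hdisj, inner_add_left, sum_inner, sum_inner,
      mul_add, Finset.mul_sum, Finset.mul_sum]
    congr 1
    · apply Finset.sum_congr rfl
      intro j _
      rw [real_inner_smul_left, hTdef]
    · apply Finset.sum_congr rfl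
      intro j _
      rw [real_inner_smul_left, hTdef]
  -- Step 3 : lower bound on the within-cluster part
  have step3 : MS * (m i0 * m j0 * (‖Q i0 - Q j0‖ ^ (2*a) * ‖Q i0 - Q j0‖^2))
      ≤ ∑ i ∈ S, ∑ j ∈ S.erase i, T i j := by
    have hTzero : ∀ i, T i i = 0 := by
      intro i
      rw [hTdef]
      simp
    have herase : ∀ i ∈ S, ∑ j ∈ S.erase i, T i j = ∑ j ∈ S, T i j := by
      intro i _
      exact Finset.sum_erase S (hTzero i)
    rw [Finset.sum_congr rfl herase]
    set U : Fin n → Fin n → ℝ := fun i j =>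
      m i * m j * ‖Q i - Q j‖ ^ (2*a) * (MS * ‖Q i - Q j‖^2) with hUdef
    have hU_nonneg : ∀ i j, 0 ≤ U i j := by
      intro i j
      rw [hUdef]
      simp only
      have h0 := Real.rpow_nonneg (norm_nonneg (Q i - Q j)) (2*a)
      have h1 := (hm i).le
      have h2 := (hm j).le
      have h3 := hMSpos.le
      have h4 := sq_nonneg ‖Q i - Q j‖
      exact mul_nonneg (mul_nonneg (mul_nonneg h1 h2) h0) (mul_nonneg h3 h4)
    have hTU : ∀ i j, T i j + T j i = U i j := by
      intro i j
      rw [hTdef, hUdef]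
      simp only
      have hnrev : ‖Q j - Q i‖ = ‖Q i - Q j‖ := norm_sub_rev _ _
      have hneg : (Q j - Q i : EuclideanSpace ℝ (Fin k)) = -(Q i - Q j) := by abel
      rw [hnrev, hneg, inner_neg_left]
      have hinner : ⟪(Q i - Q j : EuclideanSpace ℝ (Fin k)), w i⟫
            - ⟪(Q i - Q j : EuclideanSpace ℝ (Fin k)), w j⟫ = MS * ‖Q i - Q j‖^2 := by
        rw [← inner_sub_right, hwsub i j, real_inner_smul_right, real_inner_self_eq_norm_sq]
      linear_combination (m i * m j * ‖Q i - Q j‖ ^ (2*a)) * hinner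
    have hsymT : (∑ i ∈ S, ∑ j ∈ S, T i j) * 2 = ∑ i ∈ S, ∑ j ∈ S, U i j := by
      have h1 : ∑ i ∈ S, ∑ j ∈ S, T i j = ∑ i ∈ S, ∑ j ∈ S, T j i := by
        rw [Finset.sum_comm]
      calc (∑ i ∈ S, ∑ j ∈ S, T i j) * 2
          = (∑ i ∈ S, ∑ j ∈ S, T i j) + (∑ i ∈ S, ∑ j ∈ S, T j i) := by rw [← h1]; ring
        _ = ∑ i ∈ S, ∑ j ∈ S, (T i j + T j i) := by
            rw [← Finset.sum_add_distrib]
            apply Finset.sum_congr rfl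
            intro i _
            rw [← Finset.sum_add_distrib]
        _ = _ := by
            apply Finset.sum_congr rfl
            intro i _
            exact Finset.sum_congr rfl fun j _ => hTU i j
    have hpair : U i0 j0 + U j0 i0 ≤ ∑ i ∈ S, ∑ j ∈ S, U i j := by
      have hsub : {i0, j0} ⊆ S := by
        intro x hx
        rcases Finset.mem_insert.mp hx with h | h
        · rw [h]; exact hi0
        · rw [Finset.mem_singleton.mp h]; exact hj0
      have h1 : ∑ i ∈ ({i0, j0} : Finset (Fin n)), ∑ j ∈ S, U i j
          ≤ ∑ i ∈ S, ∑ j ∈ S, U i j := by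
        apply Finset.sum_le_sum_of_subset_of_nonneg hsub
        intro i _ _
        exact Finset.sum_nonneg fun j _ => hU_nonneg i j
      rw [Finset.sum_pair hij] at h1
      refine le_trans (add_le_add ?_ ?_) h1
      · exact Finset.single_le_sum (fun j _ => hU_nonneg i0 j) hj0
      · exact Finset.single_le_sum (fun j _ => hU_nonneg j0 j) hi0
    have hU0 : U i0 j0 + U j0 i0
        = 2 * (MS * (m i0 * m j0 * (‖Q i0 - Q j0‖ ^ (2*a) * ‖Q i0 - Q j0‖^2))) := by
      rw [hUdef]
      simp only
      rw [norm_sub_rev (Q j0) (Q i0)]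
      ring
    linarith [hpair, hsymT, hU0]
  -- Step 4 : lower bound on the cross part
  have step4 : -(2 * M^3 * (g ^ (2*a) * g) * ρ) ≤ ∑ i ∈ S, ∑ j ∈ Finset.univ \ S, T i j := by
    have hterm : ∀ i ∈ S, ∀ j ∈ Finset.univ \ S,
        -(m i * m j * ((g ^ (2*a) * g) * (M * (2 * ρ)))) ≤ T i j := by
      intro i hi j hj
      have hjS : j ∉ S := (Finset.mem_sdiff.mp hj).2
      have hgd : g ≤ ‖Q i - Q j‖ := hsep i hi j hjS
      have hdpos : 0 < ‖Q i - Q j‖ := lt_of_lt_of_le hg hgd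
      have hkey : ‖Q i - Q j‖ ^ (2*a) * ‖Q i - Q j‖ ≤ g ^ (2*a) * g := by
        have h1 : ‖Q i - Q j‖ ^ (2*a) * ‖Q i - Q j‖ = ‖Q i - Q j‖ ^ (2*a+1) := by
          rw [Real.rpow_add_one (ne_of_gt hdpos)]
        have h2 : g ^ (2*a) * g = g ^ (2*a+1) := by
          rw [Real.rpow_add_one (ne_of_gt hg)]
        rw [h1, h2]
        exact Real.rpow_le_rpow_of_nonpos hg hgd (by linarith)
      have hinner : -(‖Q i - Q j‖ * ‖w i‖) ≤ ⟪(Q i - Q j : EuclideanSpace ℝ (Fin k)), w i⟫ := by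
        have h4 := abs_real_inner_le_norm (Q i - Q j : EuclideanSpace ℝ (Fin k)) (w i)
        have h3 := neg_abs_le ⟪(Q i - Q j : EuclideanSpace ℝ (Fin k)), w i⟫
        linarith
      rw [hTdef]
      simp only
      have hrn : (0:ℝ) ≤ ‖Q i - Q j‖ ^ (2*a) := Real.rpow_nonneg (norm_nonneg _) _
      have hwn : ‖w i‖ ≤ M * (2 * ρ) := hw i hi
      have hwnn : (0:ℝ) ≤ ‖w i‖ := norm_nonneg _
      have c1 : -(‖Q i - Q j‖ ^ (2*a) * (‖Q i - Q j‖ * ‖w i‖))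
          ≤ ‖Q i - Q j‖ ^ (2*a) * ⟪(Q i - Q j : EuclideanSpace ℝ (Fin k)), w i⟫ := by
        have h5 := mul_le_mul_of_nonneg_left hinner hrn
        linarith [h5]
      have c2 : ‖Q i - Q j‖ ^ (2*a) * (‖Q i - Q j‖ * ‖w i‖) ≤ (g ^ (2*a) * g) * (M * (2 * ρ)) := by
        have e1 : ‖Q i - Q j‖ ^ (2*a) * (‖Q i - Q j‖ * ‖w i‖)
            = (‖Q i - Q j‖ ^ (2*a) * ‖Q i - Q j‖) * ‖w i‖ := by ring
        rw [e1]
        have hgg : (0:ℝ) ≤ g ^ (2*a) * g := mul_nonneg (Real.rpow_nonneg hg.le _) hg.le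
        exact mul_le_mul hkey hwn hwnn hgg
      have hmij : (0:ℝ) < m i * m j := mul_pos (hm i) (hm j)
      have c3 : -((g ^ (2*a) * g) * (M * (2 * ρ)))
          ≤ ‖Q i - Q j‖ ^ (2*a) * ⟪(Q i - Q j : EuclideanSpace ℝ (Fin k)), w i⟫ := by
        linarith [c1, c2]
      have c4 := mul_le_mul_of_nonneg_left c3 hmij.le
      linarith [c4]
    have hsum : ∑ i ∈ S, ∑ j ∈ Finset.univ \ S,
        -(m i * m j * ((g ^ (2*a) * g) * (M * (2 * ρ))))
        ≤ ∑ i ∈ S, ∑ j ∈ Finset.univ \ S, T i j := by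
      apply Finset.sum_le_sum
      intro i hi
      apply Finset.sum_le_sum
      intro j hj
      exact hterm i hi j hj
    refine le_trans ?_ hsum
    have hdsum : (∑ i ∈ S, ∑ j ∈ Finset.univ \ S,
        -(m i * m j * ((g ^ (2*a) * g) * (M * (2 * ρ)))))
        = -((MS * (∑ j ∈ Finset.univ \ S, m j)) * ((g ^ (2*a) * g) * (M * (2 * ρ)))) := by
      set K := (g ^ (2*a) * g) * (M * (2 * ρ)) with hK
      have e0 : ∀ i ∈ S, ∑ j ∈ Finset.univ \ S, -(m i * m j * K)
          = (∑ j ∈ Finset.univ \ S, m j) * (m i * (-K)) := by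
        intro i _
        rw [Finset.sum_mul]
        exact Finset.sum_congr rfl fun j _ => by ring
      rw [Finset.sum_congr rfl e0]
      have e1 : ∀ i ∈ S, (∑ j ∈ Finset.univ \ S, m j) * (m i * (-K))
          = ((∑ j ∈ Finset.univ \ S, m j) * (-K)) * m i := fun i _ => by ring
      rw [Finset.sum_congr rfl e1, ← Finset.mul_sum, ← hMSdef]
      ring
    rw [hdsum]
    have hb2 : ∑ j ∈ Finset.univ \ S, m j ≤ M :=
      Finset.sum_le_sum_of_subset_of_nonneg (Finset.sdiff_subset) (fun i _ _ => (hm i).le)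
    have hp2 : (0:ℝ) ≤ ∑ j ∈ Finset.univ \ S, m j :=
      Finset.sum_nonneg fun i _ => (hm i).le
    have k1 : MS * (∑ j ∈ Finset.univ \ S, m j) ≤ M * M := mul_le_mul hMSM hb2 hp2 hMpos.le
    have k2 : (0:ℝ) ≤ (g ^ (2*a) * g) * (M * (2 * ρ)) := by
      have h0 := Real.rpow_nonneg hg.le (2*a)
      have h2ρ : (0:ℝ) ≤ 2 * ρ := by linarith
      exact mul_nonneg (mul_nonneg h0 hg.le) (mul_nonneg hMpos.le h2ρ)
    have k3 := mul_le_mul_of_nonneg_right k1 k2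
    linarith [k3]
  -- combine
  have hcomb := step1
  rw [hsplit] at hcomb
  linarith [step3, step4, hcomb]

set_option maxHeartbeats 1000000 in
/-- Main Theorem: a universal positive lower bound on mutual distances of
relative equilibria with given masses and rotation. -/
theorem main_lower_bound {k n : ℕ} (hn : 3 ≤ n) (A : Fin (k / 2) → ℝ) (hA : ∀ s, 0 < A s)
    (m : Fin n → ℝ) (hm : ∀ i, 0 < m i) (a : ℝ) (ha : a < -1/2) :
    ∃ c > (0 : ℝ), ∀ Q : Fin n → EuclideanSpace ℝ (Fin k),
      (∀ i j, i ≠ j → Q i ≠ Q j) →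
      (∀ i, mulVecE ((Amat k A) ^ 2) (Q i) =
        ∑ j ∈ Finset.univ.filter (· ≠ i), (m j * ‖Q i - Q j‖ ^ (2 * a)) • (Q i - Q j)) →
      ∀ i j, i ≠ j → c < ‖Q i - Q j‖ := by
  classical
  have hn0 : 0 < n := by omega
  set M : ℝ := ∑ i, m i with hMdef
  have hMpos : 0 < M := Finset.sum_pos (fun i _ => hm i) ⟨⟨0, hn0⟩, Finset.mem_univ _⟩
  obtain ⟨imin, -, himin⟩ := Finset.exists_min_image Finset.univ m ⟨⟨0, hn0⟩, Finset.mem_univ _⟩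
  set μ : ℝ := m imin with hμdef
  have hμpos : 0 < μ := hm imin
  have hμle : ∀ i, μ ≤ m i := fun i => himin i (Finset.mem_univ i)
  have hμM : μ ≤ M := le_trans (hμle ⟨0, hn0⟩)
    (Finset.single_le_sum (fun i _ => (hm i).le) (Finset.mem_univ _))
  set t : ℝ := -(2*a+1) with htdef
  have ht : 0 < t := by rw [htdef]; linarith
  have hM3 : (0:ℝ) < M^3 := pow_pos hMpos 3
  have hμ3 : (0:ℝ) < μ^3 := pow_pos hμpos 3
  set β : ℝ := 4 * M^3 / μ^3 with hβdef
  have hβ : 0 < β := div_pos (by linarith) hμ3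
  have hCC1 : ∀ s, 1 ≤ Cseq β t s := Cseq_one_le β t hβ.le
  have hCCmono := Cseq_mono β t hβ.le
  set α : ℝ := alphaA A with hαdef
  have hαpos : 0 < α := alphaA_pos A
  set Cmax : ℝ := Cseq β t (n+1) with hCmaxdef
  have hCmaxpos : 0 < Cmax := lt_of_lt_of_le one_pos (hCC1 (n+1))
  set E : ℝ := 4 * α * M^2 * Cmax^2 / μ^3 with hEdef
  have hEpos : 0 < E := by
    apply div_pos _ hμ3
    have h1 : (0:ℝ) < M^2 := pow_pos hMpos 2
    have h2 : (0:ℝ) < Cmax^2 := pow_pos hCmaxpos 2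
    have h3 : (0:ℝ) < 4*α := by linarith
    have h4 := mul_pos (mul_pos h3 h1) h2
    linarith [h4]
  refine ⟨(E+1) ^ (2*a)⁻¹, Real.rpow_pos_of_pos (by linarith) _, ?_⟩
  intro Q hQd heq
  -- minimal-distance pair
  have hoffne : (Finset.univ.offDiag : Finset (Fin n × Fin n)).Nonempty := by
    refine ⟨(⟨0, hn0⟩, ⟨1, by omega⟩), Finset.mem_offDiag.mpr
      ⟨Finset.mem_univ _, Finset.mem_univ _, ?_⟩⟩
    intro hh
    have := congrArg Fin.val hh
    simp at this
  obtain ⟨p, hpmem, hpmin⟩ :=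
    Finset.exists_min_image _ (fun p : Fin n × Fin n => ‖Q p.1 - Q p.2‖) hoffne
  set i0 := p.1 with hi0def
  set j0 := p.2 with hj0def
  have hij : i0 ≠ j0 := (Finset.mem_offDiag.mp hpmem).2.2
  set r : ℝ := ‖Q i0 - Q j0‖ with hrdef
  have hrpos : 0 < r := by
    rw [hrdef]
    exact norm_pos_iff.mpr (sub_ne_zero_of_ne (hQd i0 j0 hij))
  have hrmin : ∀ i j, i ≠ j → r ≤ ‖Q i - Q j‖ := by
    intro i j hij'
    exact hpmin (i, j)
      (Finset.mem_offDiag.mpr ⟨Finset.mem_univ _, Finset.mem_univ _, hij'⟩)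
  -- growing family of ball clusters
  set f : ℕ → Finset (Fin n) :=
    fun s => Finset.univ.filter (fun j => ‖Q j - Q i0‖ ≤ Cseq β t s * r) with hfdef
  have hfmono : ∀ s, f s ⊆ f (s+1) := by
    intro s j hj
    rw [hfdef] at hj ⊢
    simp only [Finset.mem_filter] at hj ⊢
    refine ⟨Finset.mem_univ _, le_trans hj.2 ?_⟩
    exact mul_le_mul_of_nonneg_right (hCCmono (Nat.le_succ s)) hrpos.le
  obtain ⟨s, hsn, hfs⟩ := pigeon f hfmono
  set S : Finset (Fin n) := f s with hSdef
  have hi0S : i0 ∈ S := by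
    rw [hSdef, hfdef]
    simp only [Finset.mem_filter]
    refine ⟨Finset.mem_univ _, ?_⟩
    rw [sub_self, norm_zero]
    have := hCC1 s
    nlinarith
  have hj0S : j0 ∈ S := by
    rw [hSdef, hfdef]
    simp only [Finset.mem_filter]
    refine ⟨Finset.mem_univ _, ?_⟩
    rw [norm_sub_rev, ← hrdef]
    have := hCC1 s
    nlinarith
  have hball : ∀ i ∈ S, ‖Q i - Q i0‖ ≤ Cseq β t s * r := by
    intro i hi
    rw [hSdef, hfdef] at hi
    simp only [Finset.mem_filter] at hi
    exact hi.2
  set gap : ℝ := (1 + β * Cseq β t s) ^ t⁻¹ with hgapdef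
  have hXpos : (0:ℝ) < 1 + β * Cseq β t s := by
    have := hCC1 s
    nlinarith
  have hgap1 : 1 ≤ gap := by
    rw [hgapdef]
    apply Real.one_le_rpow
    · have := hCC1 s; nlinarith
    · exact inv_nonneg.mpr ht.le
  have hgappos : 0 < gap := lt_of_lt_of_le one_pos hgap1
  have hCs1 : Cseq β t (s+1) = Cseq β t s + gap := by
    rw [hgapdef]
    rfl
  have hsep : ∀ i ∈ S, ∀ j ∉ S, gap * r ≤ ‖Q i - Q j‖ := by
    intro i hi j hj
    have hj' : j ∉ f (s+1) := by rw [← hfs]; exact hj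
    have hjd : Cseq β t (s+1) * r < ‖Q j - Q i0‖ := by
      by_contra hc
      push_neg at hc
      apply hj'
      rw [hfdef]
      simp only [Finset.mem_filter]
      exact ⟨Finset.mem_univ _, hc⟩
    have htri : ‖Q j - Q i0‖ ≤ ‖Q i - Q j‖ + ‖Q i - Q i0‖ := by
      have he : Q j - Q i0 = -(Q i - Q j) + (Q i - Q i0) := by abel
      calc ‖Q j - Q i0‖ = ‖-(Q i - Q j) + (Q i - Q i0)‖ := by rw [← he]
        _ ≤ ‖-(Q i - Q j)‖ + ‖Q i - Q i0‖ := norm_add_le _ _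
        _ = ‖Q i - Q j‖ + ‖Q i - Q i0‖ := by rw [norm_neg]
    have hballi := hball i hi
    rw [hCs1] at hjd
    linarith [hjd, htri, hballi]
  -- apply the cluster inequality
  have hρnn : (0:ℝ) ≤ Cseq β t s * r := by
    have := hCC1 s
    nlinarith
  have hkey := cluster_ineq A m hm a ha Q heq S i0 j0 hi0S hj0S hij
    (Cseq β t s * r) (gap * r) hρnn (mul_pos hgappos hrpos) hball hsep
  rw [← hrdef] at hkey
  -- arithmetic on the key inequality
  set P : ℝ := r ^ (2*a) with hPdef
  have hPnn : 0 ≤ P := Real.rpow_nonneg hrpos.le _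
  have hMS : μ ≤ ∑ i ∈ S, m i :=
    le_trans (hμle i0) (Finset.single_le_sum (fun i _ => (hm i).le) hi0S)
  have hPr : 0 ≤ P * r^2 := mul_nonneg hPnn (sq_nonneg r)
  have h1 : μ^3 * (P * r^2) ≤ (∑ i ∈ S, m i) * (m i0 * m j0 * (P * r^2)) := by
    have b1 : μ * μ ≤ m i0 * m j0 := mul_le_mul (hμle i0) (hμle j0) hμpos.le (hm i0).le
    have b2 : μ * (μ*μ) ≤ (∑ i ∈ S, m i) * (m i0 * m j0) :=
      mul_le_mul hMS b1 (by nlinarith) (le_trans hμpos.le hMS)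
    calc μ^3 * (P * r^2) = (μ*(μ*μ)) * (P*r^2) := by ring
      _ ≤ ((∑ i ∈ S, m i) * (m i0 * m j0)) * (P*r^2) := mul_le_mul_of_nonneg_right b2 hPr
      _ = (∑ i ∈ S, m i) * (m i0 * m j0 * (P * r^2)) := by ring
  have h2a1ne : 2*a+1 ≠ 0 := by linarith
  -- rewrite the cross factor
  have hgrw : (gap*r) ^ (2*a) * (gap*r) = (1 + β * Cseq β t s)⁻¹ * (P * r) := by
    have e1 : (gap*r) ^ (2*a) * (gap*r) = (gap*r) ^ (2*a+1) :=
      (Real.rpow_add_one (ne_of_gt (mul_pos hgappos hrpos)) (2*a)).symm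
    have e2 : ((gap*r) : ℝ) ^ (2*a+1) = gap ^ (2*a+1) * r ^ (2*a+1) :=
      Real.mul_rpow hgappos.le hrpos.le
    have e3 : gap ^ (2*a+1) = (1 + β * Cseq β t s)⁻¹ := by
      rw [hgapdef, ← Real.rpow_mul hXpos.le]
      have hexp : t⁻¹ * (2*a+1) = -1 := by
        rw [htdef, inv_neg, neg_mul, inv_mul_cancel₀ h2a1ne]
      rw [hexp, Real.rpow_neg_one]
    have e4 : r ^ (2*a+1) = P * r := by
      rw [hPdef]
      exact Real.rpow_add_one (ne_of_gt hrpos) (2*a)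
    rw [e1, e2, e3, e4]
  have hCCspos : 0 < Cseq β t s := lt_of_lt_of_le one_pos (hCC1 s)
  have hXinv : (1 + β * Cseq β t s)⁻¹ ≤ (β * Cseq β t s)⁻¹ := by
    apply inv_anti₀ (mul_pos hβ hCCspos)
    linarith
  have hcross : 2 * M^3 * ((gap*r) ^ (2*a) * (gap*r)) * (Cseq β t s * r)
      ≤ μ^3/2 * (P * r^2) := by
    rw [hgrw]
    have hPrnn : (0:ℝ) ≤ P * r := mul_nonneg hPnn hrpos.le
    have m1 : (1 + β * Cseq β t s)⁻¹ * (P * r) ≤ (β * Cseq β t s)⁻¹ * (P * r) :=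
      mul_le_mul_of_nonneg_right hXinv hPrnn
    have m2 : 2*M^3*((1 + β * Cseq β t s)⁻¹ * (P * r)) ≤ 2*M^3*((β * Cseq β t s)⁻¹ * (P * r)) :=
      mul_le_mul_of_nonneg_left m1 (by nlinarith)
    have m3 := mul_le_mul_of_nonneg_right m2 (mul_nonneg hCCspos.le hrpos.le)
    calc 2 * M^3 * ((1 + β * Cseq β t s)⁻¹ * (P * r)) * (Cseq β t s * r)
        ≤ 2*M^3*((β * Cseq β t s)⁻¹ * (P * r)) * (Cseq β t s * r) := m3
      _ = μ^3/2 * (P * r^2) := by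
          rw [hβdef]
          have hM0 : M ≠ 0 := ne_of_gt hMpos
          have hμ0 : μ ≠ 0 := ne_of_gt hμpos
          have hCC0 : Cseq β t s ≠ 0 := ne_of_gt hCCspos
          field_simp
          rw [mul_right_comm _ _ P, mul_div_cancel_right₀]
          · ring
          · rw [hβdef] at hCC0
            convert hCC0 using 3
            ring
  -- final distance bound
  have hP2 : P ≤ E := by
    have h2 : μ^3 * (P * r^2) ≤ 2*α*M^2*(Cseq β t s * r)^2 + μ^3/2 * (P * r^2) := by
      linarith [hkey, h1, hcross]
    have hle : Cseq β t s ≤ Cmax := hCCmono (by omega)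
    have h3 : 2*α*M^2*(Cseq β t s * r)^2 ≤ 2*α*M^2*Cmax^2*r^2 := by
      have q2 : Cseq β t s^2 ≤ Cmax^2 := pow_le_pow_left₀ hCCspos.le hle 2
      have hαM : (0:ℝ) ≤ 2*α*M^2 := by nlinarith [sq_nonneg M]
      calc 2*α*M^2*(Cseq β t s * r)^2 = (2*α*M^2) * (Cseq β t s^2 * r^2) := by ring
        _ ≤ (2*α*M^2) * (Cmax^2 * r^2) :=
            mul_le_mul_of_nonneg_left (mul_le_mul_of_nonneg_right q2 (sq_nonneg r)) hαM
        _ = 2*α*M^2*Cmax^2*r^2 := by ring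
    have h5 : (μ^3 * P) * r^2 ≤ (4*α*M^2*Cmax^2) * r^2 := by linarith [h2, h3]
    have h6 : μ^3 * P ≤ 4*α*M^2*Cmax^2 :=
      le_of_mul_le_mul_right h5 (pow_pos hrpos 2)
    rw [hEdef, le_div_iff₀ hμ3]
    linarith
  -- conclude
  intro i j hij'
  by_contra hc
  push_neg at hc
  have hrc : r ≤ (E+1) ^ (2*a)⁻¹ := le_trans (hrmin i j hij') hc
  have h2ane : (2*a) ≠ 0 := ne_of_lt (by linarith)
  have hcpow : (((E+1) ^ (2*a)⁻¹ : ℝ)) ^ (2*a) = E+1 := by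
    rw [← Real.rpow_mul (by linarith : (0:ℝ) ≤ E+1), inv_mul_cancel₀ h2ane, Real.rpow_one]
  have hmono2 : (((E+1) ^ (2*a)⁻¹ : ℝ)) ^ (2*a) ≤ r ^ (2*a) :=
    Real.rpow_le_rpow_of_nonpos hrpos hrc (by linarith)
  rw [hcpow] at hmono2
  rw [← hPdef] at hmono2
  linarith [hP2, hmono2]
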